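/- Fix integers r ≥ 1, 0 ≤ k < l ≤ r, and real constants a₀, …, a_r with p(λ) = Σ a_hλ^h. Let λ₁, …, λ_r be distinct nonzero reals, u_i = λ_i^{l-k}, f^i = -2(l-k)²λ_i^{2l-k-2}/P'(λ_i), and Q_m^{ii} = (λ_i^{m}p'(λ_i) - mλ_i^{m-1}p(λ_i))/(2P'(λ_i)²) transformed by the factor ((l-k)λ_i^{l-k-1})². Then the central invariants c_i = (Q̃_l^{ii} - u_i·Q̃_k^{ii})/(3(f^i)²), with Q̃_m^{ii} = ((l-k)λ_i^{l-k-1})²·Q_m^{ii}, equal c_i = p(λ_i)/(24(k-l)λ_i^{l-1}). -/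

import Mathlib

set_option maxHeartbeats 1000000 in
theorem key_id (k l : ℤ) (L PP A B : ℝ) (hL : L ≠ 0) (hP : PP ≠ 0) (hlk : ((l-k:ℤ):ℝ) ≠ 0) :
    ((((l-k:ℤ):ℝ) * L ^ (l-k-1))^2 * ((L^l * B - ((l:ℤ):ℝ) * L^(l-1) * A)/(2*PP^2))
      - L^(l-k) * ((((l-k:ℤ):ℝ) * L^(l-k-1))^2 * ((L^k * B - ((k:ℤ):ℝ)*L^(k-1)*A)/(2*PP^2))))
      / (3 * (-2 * (((l-k:ℤ):ℝ))^2 * L^(2*l-k-2)/PP)^2)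
    = A / (24 * (((k-l:ℤ):ℝ)) * L^(l-1)) := by
  have e1 : L ^ l = L * L ^ (l-1) := by
    have h := zpow_add_one₀ hL (l-1)
    rw [show l-1+1 = l by ring] at h; rw [h]; ring
  have e2 : L ^ (l-k) = L ^ (l-k-1) * L := by
    have h := zpow_add_one₀ hL (l-k-1)
    rw [show l-k-1+1 = l-k by ring] at h; rw [h]
  have e3 : L ^ k = L ^ (l-1) / L ^ (l-k-1) := by
    have h := zpow_sub₀ hL (l-1) (l-k-1)
    rw [show l-1-(l-k-1) = k by ring] at h; rw [h]
  have e4 : L ^ (k-1) = L ^ (l-1) / (L ^ (l-k-1) * L) := by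
    have h := zpow_sub₀ hL (l-1) (l-k)
    rw [show l-1-(l-k) = k-1 by ring] at h; rw [h, e2]
  have e5 : L ^ (2*l-k-2) = L ^ (l-k-1) * L ^ (l-1) := by
    have h := zpow_add₀ hL (l-k-1) (l-1)
    rw [show l-k-1+(l-1) = 2*l-k-2 by ring] at h; rw [← h]
  set x := L ^ (l-k-1) with hx
  set y := L ^ (l-1) with hy
  have hx0 : x ≠ 0 := zpow_ne_zero _ hL
  have hy0 : y ≠ 0 := zpow_ne_zero _ hL
  rw [e1, e2, e3, e4, e5]
  have hlk' : (l:ℝ) - (k:ℝ) ≠ 0 := by push_cast at hlk; exact hlk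
  have hkl2 : (k:ℝ) - (l:ℝ) ≠ 0 := fun h => hlk' (by linarith)
  push_cast
  field_simp
  ring

open Finset in
/-- The central invariants of the bihamiltonian structure `B_{k,l}` of the
`r`-KdV-CH hierarchy: with `P'(λ_i) = ∏_{j≠i}(λ_i - λ_j)`,
`p(λ) = Σ_{h=0}^r a_h λ^h`, canonical coordinates `u_i = λ_i^{l-k}`, metric entries
`f^i = -2(l-k)² λ_i^{2l-k-2}/P'(λ_i)`, dispersive coefficients
`Q_m^{ii} = (λ_i^m p'(λ_i) - m λ_i^{m-1} p(λ_i))/(2 P'(λ_i)²)` and their transforms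
`Q̃_m^{ii} = ((l-k) λ_i^{l-k-1})² Q_m^{ii}`, the central invariants
`c_i = (Q̃_l^{ii} - u_i Q̃_k^{ii})/(3 (f^i)²)` equal `p(λ_i)/(24(k-l) λ_i^{l-1})`. -/
theorem stmt_19 (r : ℕ) (hr : 1 ≤ r) (k l : ℤ) (h0k : 0 ≤ k) (hkl : k < l)
    (hlr : l ≤ r) (a : ℕ → ℝ) (lam : Fin r → ℝ) (hne : ∀ i, lam i ≠ 0)
    (hinj : Function.Injective lam) :
    let P' : Fin r → ℝ := fun i => ∏ j ∈ Finset.univ.erase i, (lam i - lam j)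
    let p : ℝ → ℝ := fun x => ∑ h ∈ Finset.range (r + 1), a h * x ^ h
    let p' : ℝ → ℝ := fun x => ∑ h ∈ Finset.range (r + 1), (h : ℝ) * a h * x ^ (h - 1)
    let u : Fin r → ℝ := fun i => lam i ^ (l - k)
    let f : Fin r → ℝ := fun i =>
      -2 * ((l - k : ℤ) : ℝ) ^ 2 * lam i ^ (2 * l - k - 2) / P' i
    let Q : ℤ → Fin r → ℝ := fun m i =>
      (lam i ^ m * p' (lam i) - ((m : ℤ) : ℝ) * lam i ^ (m - 1) * p (lam i)) /
        (2 * (P' i) ^ 2)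
    let Qt : ℤ → Fin r → ℝ := fun m i =>
      (((l - k : ℤ) : ℝ) * lam i ^ (l - k - 1)) ^ 2 * Q m i
    ∀ i, (Qt l i - u i * Qt k i) / (3 * (f i) ^ 2) =
      p (lam i) / (24 * ((k - l : ℤ) : ℝ) * lam i ^ (l - 1)) := by
  intro P' p p' u f Q Qt i
  have hPP : P' i ≠ 0 :=
    Finset.prod_ne_zero_iff.2 fun j hj =>
      sub_ne_zero.2 fun h => (Finset.mem_erase.1 hj).1 (hinj h).symm
  have hlk : ((l-k:ℤ):ℝ) ≠ 0 := by
    exact_mod_cast sub_ne_zero.2 hkl.ne'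
  exact key_id k l (lam i) (P' i) (p (lam i)) (p' (lam i)) (hne i) hPP hlk
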